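/- Fix odd m ≥ 1 and the run-length constraint ℓ ≥ 1. For any sequence s₀, s₁, ..., s_{K} where each s_j is built by concatenating j codewords (each chosen from a complementary pair {c, c̄} of length-m run-length-ℓ-limited 4-ary words, the choice made so the new codeword's disparity has sign opposite to the running disparity) together with one arbitrary bridging symbol per codeword, the total disparity of the length-K(m+1) sequence lies in [−(m+1), m+1]. -/
import Mathlib


/-- A sequence (as a list) contains a run of `L` identical consecutive symbols. -/
def hasRun (L : ℕ) (l : List (Fin 4)) : Prop := ∃ x : Fin 4, List.replicate L x <:+: l

/-- Disparity `p(c) = (#G + #C) − (#A + #T)` with `A=0, T=1, G=2, C=3`. -/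
def disparity (l : List (Fin 4)) : ℤ :=
  ((l.count 2 + l.count 3 : ℕ) : ℤ) - ((l.count 0 + l.count 1 : ℕ) : ℤ)

lemma disp_cons (a : Fin 4) (t : List (Fin 4)) :
    disparity (a :: t) = disparity t + disparity [a] := by
  fin_cases a <;> simp [disparity, List.count_cons] <;> ring

lemma disp_single (a : Fin 4) : |disparity [a]| ≤ 1 := by
  fin_cases a <;> simp [disparity]

lemma disp_abs (l : List (Fin 4)) : |disparity l| ≤ l.length := by
  induction l with
  | nil => simp [disparity]
  | cons a t ih =>
    rw [disp_cons]
    calc |disparity t + disparity [a]| ≤ |disparity t| + |disparity [a]| := abs_add_le _ _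
    _ ≤ (t.length : ℤ) + 1 := add_le_add ih (disp_single a)
    _ = ((a :: t).length : ℤ) := by simp

/-- Balancing: fix odd `m` and `ℓ ≥ 1`. Suppose codewords `w 0, …, w (K-1)` are
length-`m` run-length-`ℓ`-limited 4-ary words, each followed by one bridging symbol
`b j`, and each codeword is chosen (from a complementary pair) so that its disparity
has sign opposite to the running disparity of the sequence built so far. Then the
total disparity of the resulting length-`K(m+1)` sequence lies in `[−(m+1), m+1]`. -/
theorem stmt17 (ℓ m : ℕ) (hℓ : 1 ≤ ℓ) (hm : Odd m) (K : ℕ)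
    (w : ℕ → List (Fin 4)) (b : ℕ → Fin 4)
    (hcode : ∀ j < K, (w j).length = m ∧ ¬ hasRun (ℓ + 1) (w j))
    (hsign : ∀ j < K,
      (0 < ∑ i ∈ Finset.range j, (disparity (w i) + disparity [b i]) →
        disparity (w j) < 0) ∧
      (∑ i ∈ Finset.range j, (disparity (w i) + disparity [b i]) < 0 →
        0 < disparity (w j))) :
    |∑ i ∈ Finset.range K, (disparity (w i) + disparity [b i])| ≤ (m : ℤ) + 1 := by
  induction K with
  | zero => simp; positivity
  | succ K ih =>
    have ih' := ih (fun j hj => hcode j (by omega)) (fun j hj => hsign j (by omega))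
    rw [Finset.sum_range_succ]
    set S := ∑ i ∈ Finset.range K, (disparity (w i) + disparity [b i]) with hS
    have hwlen : |disparity (w K)| ≤ (m : ℤ) := by
      have := disp_abs (w K)
      rw [(hcode K (by omega)).1] at this
      exact this
    have hb := disp_single (b K)
    have h1 := (hsign K (by omega)).1
    have h2 := (hsign K (by omega)).2
    rw [abs_le] at ih' hwlen hb ⊢
    rcases lt_trichotomy S 0 with h | h | h
    · have := h2 h
      constructor <;> omega
    · constructor <;> omega
    · have := h1 h
      constructor <;> omega
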